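/- For every integer b ≥ 2, the sequence s_b defined by s_b(0)=0, s_b(1)=1, s_b(bn)=s_b(n), s_b(bn+1)=s_b(n)+s_b(n+1), and s_b(bn+i)=s_b(n+1) for 2 ≤ i ≤ b-1 (for n ≥ 1, plus these recurrences at appropriate small values), satisfies: for n ≥ 1, s_b(n) equals the number of hyper-(b-ary)-expansions of n-1, i.e. the number of sequences (a_i)_{i≥0} with a_i ∈ {0,1,...,b}, all but finitely many zero, and n-1 = Σ a_i b^i. -/

import Mathlib

namespace HyperB

def emb : ℕ ↪ ℕ := ⟨Nat.succ, Nat.succ_injective⟩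

noncomputable def tail (f : ℕ →₀ ℕ) : ℕ →₀ ℕ :=
  Finsupp.comapDomain Nat.succ f (Nat.succ_injective.injOn)

noncomputable def cons (a : ℕ) (g : ℕ →₀ ℕ) : ℕ →₀ ℕ :=
  Finsupp.single 0 a + Finsupp.embDomain emb g

@[simp] lemma tail_apply (f : ℕ →₀ ℕ) (i : ℕ) : tail f i = f (i + 1) := rfl

@[simp] lemma cons_zero (a : ℕ) (g : ℕ →₀ ℕ) : cons a g 0 = a := by
  simp [cons, Finsupp.embDomain_notin_range emb g 0 (by simp [emb])]

@[simp] lemma cons_succ (a : ℕ) (g : ℕ →₀ ℕ) (i : ℕ) : cons a g (i + 1) = g i := by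
  have : (Finsupp.embDomain emb g) (i + 1) = g i := Finsupp.embDomain_apply_self emb g i
  simp [cons, this]

lemma cons_tail (f : ℕ →₀ ℕ) : cons (f 0) (tail f) = f := by
  ext i; cases i with
  | zero => simp
  | succ j => simp

@[simp] lemma tail_cons (a : ℕ) (g : ℕ →₀ ℕ) : tail (cons a g) = g := by
  ext i; simp

def val (b : ℕ) (f : ℕ →₀ ℕ) : ℕ := f.sum fun i a => a * b ^ i

lemma val_cons (b a : ℕ) (g : ℕ →₀ ℕ) : val b (cons a g) = a + b * val b g := by
  unfold val cons
  rw [Finsupp.sum_add_index' (by simp) (fun i x y => add_mul x y _),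
    Finsupp.sum_single_index (by simp), Finsupp.sum_embDomain]
  simp only [emb, Function.Embedding.coeFn_mk, pow_succ, Finsupp.mul_sum]
  congr 1
  · simp
  · apply Finsupp.sum_congr; intro i _; ring

lemma val_decomp (b : ℕ) (f : ℕ →₀ ℕ) : val b f = f 0 + b * val b (tail f) := by
  conv_lhs => rw [← cons_tail f]
  exact val_cons b (f 0) (tail f)

def Tt (b m : ℕ) := {f : ℕ →₀ ℕ // (∀ i, f i ≤ b) ∧ (f.sum fun i a => a * b ^ i) = m}

lemma val_eq (b m : ℕ) (x : Tt b m) : val b x.1 = m := x.2.2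

lemma term_le (b m : ℕ) (x : Tt b m) (i : ℕ) : x.1 i * b ^ i ≤ m := by
  have key : x.1 i * b ^ i ≤ val b x.1 := by
    by_cases h : i ∈ x.1.support
    · exact Finset.single_le_sum (f := fun i => x.1 i * b ^ i) (fun _ _ => Nat.zero_le _) h
    · simp [Finsupp.notMem_support_iff.mp h, val]
  rw [val_eq b m x] at key
  exact key

lemma apply_eq_zero (b m : ℕ) (hb : 2 ≤ b) (x : Tt b m) {i : ℕ} (hi : m < i) : x.1 i = 0 := by
  by_contra h
  have h1 : b ^ i ≤ m := le_trans (Nat.le_mul_of_pos_left _ (Nat.pos_of_ne_zero h)) (term_le b m x i)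
  have h2 : i < 2 ^ i := Nat.lt_two_pow_self
  have h3 : 2 ^ i ≤ b ^ i := Nat.pow_le_pow_left hb i
  omega

lemma finite_Tt (b m : ℕ) (hb : 2 ≤ b) : Finite (Tt b m) := by
  apply Finite.of_injective (f := fun (x : Tt b m) (i : Fin (m + 1)) =>
    (⟨min (x.1 i) b, by omega⟩ : Fin (b + 1)))
  intro x y h
  apply Subtype.ext
  ext i
  rcases le_or_gt i m with hi | hi
  · have := congrFun h ⟨i, by omega⟩
    simp only [Fin.mk.injEq] at this
    have hx := x.2.1 i
    have hy := y.2.1 i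
    omega
  · rw [apply_eq_zero b m hb x hi, apply_eq_zero b m hb y hi]

lemma card_zero (b : ℕ) (hb : 2 ≤ b) : Nat.card (Tt b 0) = 1 := by
  rw [Nat.card_eq_one_iff_unique]
  constructor
  · constructor
    intro x y
    apply Subtype.ext
    ext i
    have hx : x.1 i * b ^ i ≤ 0 := term_le b 0 x i
    have hy : y.1 i * b ^ i ≤ 0 := term_le b 0 y i
    have hbp : 0 < b ^ i := pow_pos (by omega) i
    have h1 : x.1 i = 0 := by
      rcases Nat.mul_eq_zero.mp (Nat.eq_zero_of_le_zero hx) with h | h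
      · exact h
      · omega
    have h2 : y.1 i = 0 := by
      rcases Nat.mul_eq_zero.mp (Nat.eq_zero_of_le_zero hy) with h | h
      · exact h
      · omega
    omega
  · exact ⟨⟨0, fun i => by simp, by simp⟩⟩

lemma decomp (b m : ℕ) (x : Tt b m) : x.1 0 + b * val b (tail x.1) = m := by
  have h1 : val b x.1 = m := x.2.2
  rw [val_decomp] at h1
  exact h1

lemma digit0_mod (b m : ℕ) (x : Tt b m) : x.1 0 % b = m % b := by
  have h := decomp b m x
  calc x.1 0 % b = (x.1 0 + b * val b (tail x.1)) % b := (Nat.add_mul_mod_self_left _ b _).symm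
    _ = m % b := by rw [h]

lemma digit0_R (b q r : ℕ) (hb : 2 ≤ b) (hr1 : 1 ≤ r) (hrb : r < b) (x : Tt b (b * q + r)) :
    x.1 0 = r := by
  have h := digit0_mod b (b * q + r) x
  have hm : (b * q + r) % b = r := by
    rw [add_comm, Nat.add_mul_mod_self_left, Nat.mod_eq_of_lt hrb]
  rw [hm] at h
  have hle : x.1 0 ≤ b := x.2.1 0
  rcases lt_or_eq_of_le hle with hlt | heq
  · rwa [Nat.mod_eq_of_lt hlt] at h
  · rw [heq, Nat.mod_self] at h; omega

noncomputable def equivR (b q r : ℕ) (hb : 2 ≤ b) (hr1 : 1 ≤ r) (hrb : r < b) :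
    Tt b (b * q + r) ≃ Tt b q where
  toFun x := ⟨tail x.1, fun i => x.2.1 (i + 1), by
    show val b (tail x.1) = q
    have hd := decomp b (b * q + r) x
    have h0 := digit0_R b q r hb hr1 hrb x
    have : b * val b (tail x.1) = b * q := by omega
    exact Nat.eq_of_mul_eq_mul_left (by omega) this⟩
  invFun y := ⟨cons r y.1, by
    intro i
    cases i with
    | zero => simpa using le_of_lt hrb
    | succ j => simpa using y.2.1 j, by
    show val b (cons r y.1) = b * q + r
    rw [val_cons, val_eq b q y]; ring⟩
  left_inv x := by
    apply Subtype.ext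
    have h := cons_tail x.1
    rw [digit0_R b q r hb hr1 hrb x] at h
    exact h
  right_inv y := by
    apply Subtype.ext
    show tail (cons r y.1) = y.1
    exact tail_cons r y.1

lemma card_R (b q r : ℕ) (hb : 2 ≤ b) (hr1 : 1 ≤ r) (hrb : r < b) :
    Nat.card (Tt b (b * q + r)) = Nat.card (Tt b q) :=
  Nat.card_congr (equivR b q r hb hr1 hrb)

lemma digit0_Z (b q : ℕ) (hb : 2 ≤ b) (x : Tt b (b * q)) : x.1 0 = 0 ∨ x.1 0 = b := by
  have h := digit0_mod b (b * q) x
  have hm : (b * q) % b = 0 := by simp [Nat.mul_mod_right]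
  rw [hm] at h
  have hle : x.1 0 ≤ b := x.2.1 0
  rcases lt_or_eq_of_le hle with hlt | heq
  · left; rwa [Nat.mod_eq_of_lt hlt] at h
  · right; exact heq

noncomputable def equivZ (b q : ℕ) (hb : 2 ≤ b) (hq : 1 ≤ q) :
    Tt b (b * q) ≃ (Tt b q ⊕ Tt b (q - 1)) where
  toFun x :=
    if h : x.1 0 = 0 then
      Sum.inl ⟨tail x.1, fun i => x.2.1 (i + 1), by
        show val b (tail x.1) = q
        have hd := decomp b (b * q) x
        have key : b * val b (tail x.1) = b * q := by omega
        exact Nat.eq_of_mul_eq_mul_left (by omega) key⟩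
    else
      Sum.inr ⟨tail x.1, fun i => x.2.1 (i + 1), by
        show val b (tail x.1) = q - 1
        have hd := decomp b (b * q) x
        have h0 : x.1 0 = b := (digit0_Z b q hb x).resolve_left h
        have hC : b * (q - 1) + b = b * q := by
          cases q with
          | zero => omega
          | succ p => simp only [Nat.succ_sub_one]; ring
        have key : b * val b (tail x.1) = b * (q - 1) := by omega
        exact Nat.eq_of_mul_eq_mul_left (by omega) key⟩
  invFun y :=
    match y with
    | Sum.inl z => ⟨cons 0 z.1, by
        intro i
        cases i with
        | zero => simp
        | succ j => simpa using z.2.1 j, by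
        show val b (cons 0 z.1) = b * q
        rw [val_cons, val_eq b q z]; ring⟩
    | Sum.inr z => ⟨cons b z.1, by
        intro i
        cases i with
        | zero => simp
        | succ j => simpa using z.2.1 j, by
        show val b (cons b z.1) = b * q
        rw [val_cons, val_eq b (q - 1) z]
        cases q with
        | zero => omega
        | succ p => simp only [Nat.succ_sub_one]; ring⟩
  left_inv x := by
    by_cases h : x.1 0 = 0
    · simp only [dif_pos h]
      apply Subtype.ext
      have h2 := cons_tail x.1
      rw [h] at h2
      exact h2
    · simp only [dif_neg h]
      apply Subtype.ext
      have h2 := cons_tail x.1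
      rw [(digit0_Z b q hb x).resolve_left h] at h2
      exact h2
  right_inv y := by
    cases y with
    | inl z =>
      have h0 : (cons 0 z.1) 0 = 0 := cons_zero 0 z.1
      simp only [dif_pos h0]
      exact congrArg Sum.inl (Subtype.ext (tail_cons 0 z.1))
    | inr z =>
      have h0 : ¬ (cons b z.1) 0 = 0 := by simp; omega
      simp only [dif_neg h0]
      exact congrArg Sum.inr (Subtype.ext (tail_cons b z.1))

lemma card_Z (b q : ℕ) (hb : 2 ≤ b) (hq : 1 ≤ q) :
    Nat.card (Tt b (b * q)) = Nat.card (Tt b q) + Nat.card (Tt b (q - 1)) := by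
  haveI := finite_Tt b q hb
  haveI := finite_Tt b (q - 1) hb
  rw [Nat.card_congr (equivZ b q hb hq), Nat.card_sum]


lemma key (b : ℕ) (hb : 2 ≤ b) (s : ℕ → ℕ)
    (h0 : s 0 = 0) (h1 : s 1 = 1)
    (hrec : ∀ n : ℕ, s (b * n) = s n ∧ s (b * n + 1) = s n + s (n + 1) ∧
      ∀ i : ℕ, 2 ≤ i → i ≤ b - 1 → s (b * n + i) = s (n + 1)) :
    ∀ m : ℕ, s (m + 1) = Nat.card (Tt b m) := by
  intro m
  induction m using Nat.strong_induction_on with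
  | _ m ih =>
    rcases Nat.eq_zero_or_pos m with hm | hm
    · subst hm
      rw [h1, card_zero b hb]
    · have hbpos : 0 < b := by omega
      set q := m / b with hq
      set r := m % b with hr
      have hrlt : r < b := Nat.mod_lt m hbpos
      have heq : b * q + r = m := Nat.div_add_mod m b
      have hqm : 2 * q ≤ b * q := Nat.mul_le_mul_right q hb
      by_cases hr0 : r = 0
      · -- m = b * q
        have hq1 : 1 ≤ q := by
          rcases Nat.eq_zero_or_pos q with h | h
          · rw [h, Nat.mul_zero] at heq; omega
          · exact h
        have hqlt : q < m := by omega
        have e1 : m + 1 = b * q + 1 := by omega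
        rw [e1, (hrec q).2.1]
        have e2 : s (q + 1) = Nat.card (Tt b q) := ih q hqlt
        have e3 : s q = Nat.card (Tt b (q - 1)) := by
          rw [show q = q - 1 + 1 from by omega]
          exact ih (q - 1) (by omega)
        rw [e2, e3, show m = b * q from by omega, card_Z b q hb hq1, Nat.add_comm]
      · have hqlt : q < m := by omega
        by_cases hrb : r < b - 1
        · have e1 : m + 1 = b * q + (r + 1) := by omega
          rw [e1, (hrec q).2.2 (r + 1) (by omega) (by omega)]
          rw [show m = b * q + r from heq.symm, card_R b q r hb (by omega) hrlt]
          exact ih q hqlt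
        · -- r = b - 1
          have hrb' : r = b - 1 := by omega
          have e0 : b * (q + 1) = b * q + b := by ring
          have e1 : m + 1 = b * (q + 1) := by omega
          rw [e1, (hrec (q + 1)).1]
          rw [show m = b * q + r from heq.symm, card_R b q r hb (by omega) hrlt]
          exact ih q hqlt

end HyperB

/-- `s` satisfies the defining recurrences of the hyper-(b-ary) counting sequence. -/
def IsSb (b : ℕ) (s : ℕ → ℕ) : Prop :=
  s 0 = 0 ∧ s 1 = 1 ∧
  ∀ n : ℕ, s (b * n) = s n ∧ s (b * n + 1) = s n + s (n + 1) ∧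
    ∀ i : ℕ, 2 ≤ i → i ≤ b - 1 → s (b * n + i) = s (n + 1)

/-- For n ≥ 1, s_b(n) equals the number of hyper-(b-ary)-expansions of n-1. -/
theorem stmt0 (b : ℕ) (hb : 2 ≤ b) (s : ℕ → ℕ) (hs : IsSb b s) (n : ℕ) (hn : 1 ≤ n) :
    s n = Nat.card {f : ℕ →₀ ℕ //
      (∀ i, f i ≤ b) ∧ (f.sum fun i a => a * b ^ i) = n - 1} := by
  obtain ⟨h0, h1, hrec⟩ := hs
  show s n = Nat.card (HyperB.Tt b (n - 1))
  rw [show n = (n - 1) + 1 from by omega]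
  exact HyperB.key b hb s h0 h1 hrec (n - 1)
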